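/- arXiv:2508.03667 — 2 statements merged into one kernel-verified Lean document; each statement's English description precedes it below -/
import Mathlib

section
/- Let R be a Γ-graded ring such that the right R-module R is gr-noetherian (resp. gr-artinian), and let M be a Γ-graded right R-module. If M is finitely generated, then M is gr-noetherian (resp. gr-artinian). -/
open CategoryTheory

universe u

instance addSubgroupNormalOfComm {M : Type*} [AddCommGroup M] (N : AddSubgroup M) :
    N.Normal := ⟨fun n hn g => by simpa [add_comm] using hn⟩

variable {Γ : Type u} [Groupoid.{u} Γ]

/-- The morphisms of the groupoid `Γ`, bundled together with their endpoints.
For `γ : GrIdx Γ`, the morphism `γ.2.2 : γ.1 ⟶ γ.2.1` has domain `d(γ) = γ.1`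
and range `r(γ) = γ.2.1`. -/
abbrev GrIdx (Γ : Type u) [Groupoid.{u} Γ] : Type u := Σ e f : Γ, e ⟶ f

/-- The data of a `Γ`-grading, a multiplication, and local units `1_e` on an
additive group `R`. -/
structure GRingData (Γ : Type u) [Groupoid.{u} Γ] (R : Type u) [AddCommGroup R] :
    Type u where
  mul : R → R → R
  component : ∀ {e f : Γ}, (e ⟶ f) → AddSubgroup R
  one : Γ → R

/-- The data of a right scalar multiplication by `R` and a `Γ`-grading on an
additive group `M`. -/
structure GModData (Γ : Type u) [Groupoid.{u} Γ] (R : Type u) (M : Type u)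
    [AddCommGroup M] : Type u where
  smul : M → R → M
  component : ∀ {e f : Γ}, (e ⟶ f) → AddSubgroup M

namespace GRingData

variable {R : Type u} [AddCommGroup R]

/-- `𝒜` makes `R` an (object unital) `Γ`-graded ring: `R` is an associative ring,
`R = ⊕_γ R_γ`, `R_γ R_δ ⊆ R_{γδ}` when `γδ` is defined and `R_γ R_δ = 0` otherwise,
each `R_e` (`e ∈ Γ₀`) is unital with identity `1_e`, and
`1_{r(γ)} a = a 1_{d(γ)} = a` for all `a ∈ R_γ`. -/
structure IsObjectUnital (𝒜 : GRingData Γ R) : Prop where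
  mul_assoc : ∀ a b c : R, 𝒜.mul (𝒜.mul a b) c = 𝒜.mul a (𝒜.mul b c)
  left_distrib : ∀ a b c : R, 𝒜.mul a (b + c) = 𝒜.mul a b + 𝒜.mul a c
  right_distrib : ∀ a b c : R, 𝒜.mul (a + b) c = 𝒜.mul a c + 𝒜.mul b c
  decompose : ∀ x : R, ∃ (s : Finset (GrIdx Γ)) (cf : GrIdx Γ → R),
      (∀ γ ∈ s, cf γ ∈ 𝒜.component γ.2.2) ∧ x = ∑ γ ∈ s, cf γ
  independent : ∀ (s : Finset (GrIdx Γ)) (cf : GrIdx Γ → R),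
      (∀ γ ∈ s, cf γ ∈ 𝒜.component γ.2.2) → ∑ γ ∈ s, cf γ = 0 → ∀ γ ∈ s, cf γ = 0
  mul_mem : ∀ {e f g : Γ} (γ : e ⟶ f) (δ : g ⟶ e) {a b : R},
      a ∈ 𝒜.component γ → b ∈ 𝒜.component δ → 𝒜.mul a b ∈ 𝒜.component (δ ≫ γ)
  mul_eq_zero : ∀ {e f g h : Γ} (γ : e ⟶ f) (δ : g ⟶ h) {a b : R},
      h ≠ e → a ∈ 𝒜.component γ → b ∈ 𝒜.component δ → 𝒜.mul a b = 0
  one_mem : ∀ e : Γ, 𝒜.one e ∈ 𝒜.component (𝟙 e)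
  one_mul : ∀ {e f : Γ} (γ : e ⟶ f) {a : R}, a ∈ 𝒜.component γ → 𝒜.mul (𝒜.one f) a = a
  mul_one : ∀ {e f : Γ} (γ : e ⟶ f) {a : R}, a ∈ 𝒜.component γ → 𝒜.mul a (𝒜.one e) = a

/-- `R` regarded as a (`Γ`-graded) right module over itself. -/
def toMod (𝒜 : GRingData Γ R) : GModData Γ R R where
  smul := 𝒜.mul
  component := fun γ => 𝒜.component γ

end GRingData

namespace GModData

variable {R : Type u} {M : Type u} {M' : Type u} [AddCommGroup M] [AddCommGroup M']

/-- `ℳ` makes `M` a unital `Γ`-graded right module over the `Γ`-graded ring `𝒜`: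
`M` is a right `R`-module, `M = ⊕_γ M_γ`, `M_σ R_τ ⊆ M_{στ}` when `στ` is defined
and `M_σ R_τ = 0` otherwise, and `m 1_{d(σ)} = m` for all `m ∈ M_σ`. -/
structure IsGraded [AddCommGroup R] (𝒜 : GRingData Γ R) (ℳ : GModData Γ R M) :
    Prop where
  add_smul : ∀ (m n : M) (a : R), ℳ.smul (m + n) a = ℳ.smul m a + ℳ.smul n a
  smul_add : ∀ (m : M) (a b : R), ℳ.smul m (a + b) = ℳ.smul m a + ℳ.smul m b
  smul_mul : ∀ (m : M) (a b : R), ℳ.smul m (𝒜.mul a b) = ℳ.smul (ℳ.smul m a) b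
  decompose : ∀ x : M, ∃ (s : Finset (GrIdx Γ)) (cf : GrIdx Γ → M),
      (∀ γ ∈ s, cf γ ∈ ℳ.component γ.2.2) ∧ x = ∑ γ ∈ s, cf γ
  independent : ∀ (s : Finset (GrIdx Γ)) (cf : GrIdx Γ → M),
      (∀ γ ∈ s, cf γ ∈ ℳ.component γ.2.2) → ∑ γ ∈ s, cf γ = 0 → ∀ γ ∈ s, cf γ = 0
  smul_mem : ∀ {e f g : Γ} (σ : e ⟶ f) (τ : g ⟶ e) {m : M} {a : R},
      m ∈ ℳ.component σ → a ∈ 𝒜.component τ → ℳ.smul m a ∈ ℳ.component (τ ≫ σ)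
  smul_eq_zero : ∀ {e f g h : Γ} (σ : e ⟶ f) (τ : g ⟶ h) {m : M} {a : R},
      h ≠ e → m ∈ ℳ.component σ → a ∈ 𝒜.component τ → ℳ.smul m a = 0
  smul_one : ∀ {e f : Γ} (σ : e ⟶ f) {m : M}, m ∈ ℳ.component σ →
      ℳ.smul m (𝒜.one e) = m

/-- An element of `M` is homogeneous if it belongs to some homogeneous component. -/
def IsHomogeneous (ℳ : GModData Γ R M) (m : M) : Prop :=
  ∃ (e f : Γ) (γ : e ⟶ f), m ∈ ℳ.component γ

/-- `N` is a graded submodule of `M`: a submodule (subgroup closed under the right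
`R`-action) generated by its homogeneous elements, i.e. `N = ⊕_γ (N ∩ M_γ)`. -/
def IsGrSub (ℳ : GModData Γ R M) (N : AddSubgroup M) : Prop :=
  (∀ m ∈ N, ∀ a : R, ℳ.smul m a ∈ N) ∧
  ∀ n ∈ N, n ∈ AddSubgroup.closure {x : M | x ∈ N ∧ ℳ.IsHomogeneous x}

/-- `M` is gr-noetherian: there is no strictly increasing infinite chain of graded
submodules. -/
def GrNoetherian (ℳ : GModData Γ R M) : Prop :=
  ¬ ∃ c : ℕ → AddSubgroup M, (∀ n, ℳ.IsGrSub (c n)) ∧ ∀ n, c n < c (n + 1)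

/-- `M` is gr-artinian: there is no strictly decreasing infinite chain of graded
submodules. -/
def GrArtinian (ℳ : GModData Γ R M) : Prop :=
  ¬ ∃ c : ℕ → AddSubgroup M, (∀ n, ℳ.IsGrSub (c n)) ∧ ∀ n, c (n + 1) < c n

/-- The `R`-submodule of `M` generated by a set `X`. -/
def rClosure (ℳ : GModData Γ R M) (X : Set M) : AddSubgroup M :=
  sInf {N : AddSubgroup M | X ⊆ N ∧ ∀ m ∈ N, ∀ a : R, ℳ.smul m a ∈ N}

/-- `M` is finitely generated (as a right `R`-module). -/
def FG (ℳ : GModData Γ R M) : Prop := ∃ s : Finset M, ℳ.rClosure ↑s = ⊤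

/-- The submodule `N` of `M` is finitely generated. -/
def FGSub (ℳ : GModData Γ R M) (N : AddSubgroup M) : Prop :=
  ∃ s : Finset M, ↑s ⊆ (N : Set M) ∧ ℳ.rClosure ↑s = N

/-- `M` is finitely gr-cogenerated: every family of graded submodules with zero
intersection has a finite subfamily with zero intersection. -/
def FinGrCogenerated (ℳ : GModData Γ R M) : Prop :=
  ∀ S : Set (AddSubgroup M), (∀ N ∈ S, ℳ.IsGrSub N) → sInf S = ⊥ →
    ∃ t : Finset (AddSubgroup M), ↑t ⊆ S ∧ t.inf id = ⊥

/-- The quotient module `M/N`, with grading `(M/N)_γ = (M_γ + N)/N`. -/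
noncomputable def quot (ℳ : GModData Γ R M) (N : AddSubgroup M) :
    GModData Γ R (M ⧸ N) where
  smul x a := QuotientAddGroup.mk (ℳ.smul (Quotient.out x) a)
  component := fun γ => (ℳ.component γ).map (QuotientAddGroup.mk' N)

open scoped Classical in
/-- The submodule `N`, regarded as a `Γ`-graded right `R`-module. -/
noncomputable def restrict (ℳ : GModData Γ R M) (N : AddSubgroup M) :
    GModData Γ R ↥N where
  smul m a := if h : ℳ.smul (↑m) a ∈ N then ⟨ℳ.smul (↑m) a, h⟩ else 0
  component := fun γ => (ℳ.component γ).addSubgroupOf N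

/-- The subquotient module `P/N` (for `N ≤ P` graded submodules of `M`). -/
noncomputable def subquot (ℳ : GModData Γ R M) (N P : AddSubgroup M) :
    GModData Γ R (↥P ⧸ N.addSubgroupOf P) :=
  (ℳ.restrict P).quot (N.addSubgroupOf P)

/-- `M(e) = ⊕_{r(γ) = e} M_γ`, for `e ∈ Γ₀`. -/
def part (ℳ : GModData Γ R M) (e : Γ) : AddSubgroup M :=
  ⨆ (f : Γ) (γ : f ⟶ e), ℳ.component γ

/-- `Γ'₀(M) = {e ∈ Γ₀ : M(e) ≠ 0}`. -/
def partSupport (ℳ : GModData Γ R M) : Set Γ := {e : Γ | ℳ.part e ≠ ⊥}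

/-- `M` is `Γ₀`-noetherian: `M(e)` is gr-noetherian for every `e ∈ Γ₀`. -/
def G0Noetherian (ℳ : GModData Γ R M) : Prop :=
  ∀ e : Γ, (ℳ.restrict (ℳ.part e)).GrNoetherian

/-- `M` is `Γ₀`-artinian: `M(e)` is gr-artinian for every `e ∈ Γ₀`. -/
def G0Artinian (ℳ : GModData Γ R M) : Prop :=
  ∀ e : Γ, (ℳ.restrict (ℳ.part e)).GrArtinian

/-- `M` is gr-simple: `M ≠ 0` and its only graded submodules are `0` and `M`. -/
def IsGrSimple (ℳ : GModData Γ R M) : Prop :=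
  (⊤ : AddSubgroup M) ≠ ⊥ ∧ ∀ N : AddSubgroup M, ℳ.IsGrSub N → N = ⊥ ∨ N = ⊤

/-- `N` is a gr-simple graded submodule of `M`. -/
def IsGrSimpleSub (ℳ : GModData Γ R M) (N : AddSubgroup M) : Prop :=
  ℳ.IsGrSub N ∧ N ≠ ⊥ ∧
    ∀ L : AddSubgroup M, ℳ.IsGrSub L → L ≤ N → L = ⊥ ∨ L = N

/-- `N` is a gr-maximal graded submodule of `M`. -/
def IsGrMaximalSub (ℳ : GModData Γ R M) (N : AddSubgroup M) : Prop :=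
  ℳ.IsGrSub N ∧ N ≠ ⊤ ∧
    ∀ L : AddSubgroup M, ℳ.IsGrSub L → N ≤ L → L = N ∨ L = ⊤

/-- The graded Jacobson radical of `M`: the intersection of all gr-maximal graded
submodules of `M` (equal to `M` when there are none). -/
def grRad (ℳ : GModData Γ R M) : AddSubgroup M := sInf {N | ℳ.IsGrMaximalSub N}

/-- The gr-socle of `M`: the sum of all gr-simple graded submodules of `M`
(equal to `0` when there are none). -/
def grSoc (ℳ : GModData Γ R M) : AddSubgroup M := sSup {N | ℳ.IsGrSimpleSub N}

/-- `N` is gr-superfluous in `M`. -/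
def GrSuperfluous (ℳ : GModData Γ R M) (N : AddSubgroup M) : Prop :=
  ∀ X : AddSubgroup M, ℳ.IsGrSub X → N ⊔ X = ⊤ → X = ⊤

/-- `N` is gr-essential in `M`. -/
def GrEssential (ℳ : GModData Γ R M) (N : AddSubgroup M) : Prop :=
  ∀ X : AddSubgroup M, ℳ.IsGrSub X → N ⊓ X = ⊥ → X = ⊥

/-- `M` is gr-semisimple: the sum of all gr-simple graded submodules is `M`. -/
def GrSemisimple (ℳ : GModData Γ R M) : Prop :=
  sSup {N : AddSubgroup M | ℳ.IsGrSimpleSub N} = ⊤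

/-- `c 0 = 0 ⊆ c 1 ⊆ ⋯ ⊆ c n = M` is a gr-composition series of `M` of length `n`. -/
def IsGrCompSeries (ℳ : GModData Γ R M) (n : ℕ) (c : ℕ → AddSubgroup M) : Prop :=
  c 0 = ⊥ ∧ c n = ⊤ ∧ (∀ i, i ≤ n → ℳ.IsGrSub (c i)) ∧
  (∀ i, i < n → c i ≤ c (i + 1)) ∧
  ∀ i, i < n → (ℳ.subquot (c i) (c (i + 1))).IsGrSimple

/-- `M` has finite gr-length: it admits a gr-composition series. -/
def FiniteGrLength (ℳ : GModData Γ R M) : Prop := ∃ n c, ℳ.IsGrCompSeries n c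

/-- `g : M → M'` is a gr-homomorphism of graded right `R`-modules. -/
def IsGrHom (ℳ : GModData Γ R M) (𝒩 : GModData Γ R M') (g : M → M') : Prop :=
  (∀ m n : M, g (m + n) = g m + g n) ∧
  (∀ (m : M) (a : R), g (ℳ.smul m a) = 𝒩.smul (g m) a) ∧
  ∀ (e f : Γ) (σ : e ⟶ f), ∀ m ∈ ℳ.component σ, g m ∈ 𝒩.component σ

/-- `M` and `M'` are gr-isomorphic (there is a bijective gr-homomorphism). -/
def GrIso (ℳ : GModData Γ R M) (𝒩 : GModData Γ R M') : Prop :=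
  ∃ g : M → M', IsGrHom ℳ 𝒩 g ∧ Function.Bijective g

/-- `g : M → M'` is a homomorphism of degree `γ` (where `γ : e ⟶ f`, i.e.
`d(γ) = e`): `g(M_σ) ⊆ M'_{γσ}` when `γσ` is defined and `g(M_σ) = 0` otherwise. -/
def IsHomOfDeg (ℳ : GModData Γ R M) (𝒩 : GModData Γ R M') {e f : Γ} (γ : e ⟶ f)
    (g : M → M') : Prop :=
  (∀ m n : M, g (m + n) = g m + g n) ∧
  (∀ (m : M) (a : R), g (ℳ.smul m a) = 𝒩.smul (g m) a) ∧
  (∀ (a : Γ) (σ : a ⟶ e), ∀ m ∈ ℳ.component σ, g m ∈ 𝒩.component (σ ≫ γ)) ∧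
  (∀ (a b : Γ) (σ : a ⟶ b), b ≠ e → ∀ m ∈ ℳ.component σ, g m = 0)

/-- `MJ`: the submodule of `M` consisting of finite sums of elements `m a`,
`m ∈ M`, `a ∈ J`. -/
def smulSet [AddCommGroup R] (ℳ : GModData Γ R M) (J : AddSubgroup R) : AddSubgroup M :=
  AddSubgroup.closure {x : M | ∃ (m : M) (a : R), a ∈ J ∧ x = ℳ.smul m a}

open scoped Classical in
/-- The direct sum `⊕_{j ∈ J} M_j` of graded right modules, with grading
`(⊕_j M_j)_γ = ⊕_j (M_j)_γ`. -/
noncomputable def dsum {J : Type u} {Mf : J → Type u} [∀ j, AddCommGroup (Mf j)]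
    (df : ∀ j, GModData Γ R (Mf j)) : GModData Γ R (Π₀ j, Mf j) where
  smul m a :=
    if h : ∃ y : Π₀ j, Mf j, ∀ j, y j = (df j).smul (m j) a then h.choose else 0
  component := fun γ => ⨅ j : J, ((df j).component γ).comap (DFinsupp.evalAddMonoidHom j)

/-- A descending chain of graded submodules is tight if
`Γ'₀(M_i/M_{i+1}) ⊇ Γ'₀(M_{i+1}/M_{i+2})` for all `i`. -/
def TightDesc (ℳ : GModData Γ R M) (c : ℕ → AddSubgroup M) : Prop :=
  (∀ i, ℳ.IsGrSub (c i)) ∧ (∀ i, c (i + 1) ≤ c i) ∧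
  ∀ i, (ℳ.subquot (c (i + 2)) (c (i + 1))).partSupport ⊆
    (ℳ.subquot (c (i + 1)) (c i)).partSupport

/-- An ascending chain of graded submodules is tight if
`Γ'₀(M_{i+1}/M_i) ⊇ Γ'₀(M_{i+2}/M_{i+1})` for all `i`. -/
def TightAsc (ℳ : GModData Γ R M) (c : ℕ → AddSubgroup M) : Prop :=
  (∀ i, ℳ.IsGrSub (c i)) ∧ (∀ i, c i ≤ c (i + 1)) ∧
  ∀ i, (ℳ.subquot (c (i + 1)) (c (i + 2))).partSupport ⊆
    (ℳ.subquot (c i) (c (i + 1))).partSupport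

/-- `M` is strongly `Γ₀`-artinian: every tight descending chain of graded
submodules stabilizes. -/
def StronglyG0Artinian (ℳ : GModData Γ R M) : Prop :=
  ∀ c : ℕ → AddSubgroup M, ℳ.TightDesc c → ∃ n, ∀ m, n ≤ m → c m = c n

/-- `M` is strongly `Γ₀`-noetherian: every tight ascending chain of graded
submodules stabilizes. -/
def StronglyG0Noetherian (ℳ : GModData Γ R M) : Prop :=
  ∀ c : ℕ → AddSubgroup M, ℳ.TightAsc c → ∃ n, ∀ m, n ≤ m → c m = c n

end GModData

/-- `E` is a gr-injective graded right `R`-module: for all graded right `R`-modules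
`M`, `N`, every injective gr-homomorphism `g : N → M` and every gr-homomorphism
`h : N → E`, there is a gr-homomorphism `h' : M → E` with `h' ∘ g = h`. -/
def GrInjective {R : Type u} [AddCommGroup R] (𝒜 : GRingData Γ R) {E : Type u}
    [AddCommGroup E] (ℰ : GModData Γ R E) : Prop :=
  ∀ (M N : Type u) [AddCommGroup M] [AddCommGroup N]
    (ℳ : GModData Γ R M) (𝒩 : GModData Γ R N),
    ℳ.IsGraded 𝒜 → 𝒩.IsGraded 𝒜 →
    ∀ g : N → M, GModData.IsGrHom 𝒩 ℳ g → Function.Injective g →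
    ∀ h : N → E, GModData.IsGrHom 𝒩 ℰ h →
    ∃ h' : M → E, GModData.IsGrHom ℳ ℰ h' ∧ ∀ y : N, h' (g y) = h y

/-- A bundled `Γ`-graded right module over the graded ring `𝒜`. -/
structure GrModule (Γ : Type u) [Groupoid.{u} Γ] {R : Type u} [AddCommGroup R]
    (𝒜 : GRingData Γ R) : Type (u + 1) where
  carrier : Type u
  [addCommGroup : AddCommGroup carrier]
  data : GModData Γ R carrier
  graded : data.IsGraded 𝒜

attribute [instance] GrModule.addCommGroup

namespace GRingData

variable {R : Type u} [AddCommGroup R]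

/-- `R` is right `Γ₀`-noetherian. -/
def RightG0Noetherian (𝒜 : GRingData Γ R) : Prop := 𝒜.toMod.G0Noetherian

/-- `R` is right `Γ₀`-artinian. -/
def RightG0Artinian (𝒜 : GRingData Γ R) : Prop := 𝒜.toMod.G0Artinian

/-- The principal right ideal `aR`. -/
def principal (𝒜 : GRingData Γ R) (a : R) : AddSubgroup R :=
  AddSubgroup.closure {x : R | ∃ b : R, x = 𝒜.mul a b}

/-- A gr-principal graded right ideal: one of the form `aR` with `a` homogeneous. -/
def IsGrPrincipal (𝒜 : GRingData Γ R) (N : AddSubgroup R) : Prop :=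
  ∃ a : R, 𝒜.toMod.IsHomogeneous a ∧ N = 𝒜.principal a

/-- `N` is a graded left ideal of `R`, i.e. a graded submodule of `_R R`. -/
def IsGrLeftIdeal (𝒜 : GRingData Γ R) (N : AddSubgroup R) : Prop :=
  (∀ m ∈ N, ∀ a : R, 𝒜.mul a m ∈ N) ∧
  ∀ n ∈ N, n ∈ AddSubgroup.closure {x : R | x ∈ N ∧ 𝒜.toMod.IsHomogeneous x}

/-- `N` is a gr-maximal graded left ideal of `R`. -/
def IsGrMaxLeftIdeal (𝒜 : GRingData Γ R) (N : AddSubgroup R) : Prop :=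
  𝒜.IsGrLeftIdeal N ∧ N ≠ ⊤ ∧
    ∀ L : AddSubgroup R, 𝒜.IsGrLeftIdeal L → N ≤ L → L = N ∨ L = ⊤

/-- The graded Jacobson radical of `R` as a left module over itself:
the intersection of all gr-maximal graded left ideals. -/
def lRad (𝒜 : GRingData Γ R) : AddSubgroup R := sInf {N | 𝒜.IsGrMaxLeftIdeal N}

/-- `N` is a graded (two-sided) ideal of `R`. -/
def IsGrIdeal (𝒜 : GRingData Γ R) (N : AddSubgroup R) : Prop :=
  𝒜.toMod.IsGrSub N ∧ ∀ m ∈ N, ∀ a : R, 𝒜.mul a m ∈ N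

/-- `N ⊆ R_e` is a left ideal of the unital ring `R_e`. -/
def IsLeftIdealIn (𝒜 : GRingData Γ R) (e : Γ) (N : Set R) : Prop :=
  N ⊆ (𝒜.component (𝟙 e) : Set R) ∧ (0 : R) ∈ N ∧
  (∀ a ∈ N, ∀ b ∈ N, a - b ∈ N) ∧
  ∀ r ∈ 𝒜.component (𝟙 e), ∀ a ∈ N, 𝒜.mul r a ∈ N

/-- `N` is a maximal left ideal of the unital ring `R_e`. -/
def IsMaxLeftIdealIn (𝒜 : GRingData Γ R) (e : Γ) (N : Set R) : Prop :=
  𝒜.IsLeftIdealIn e N ∧ N ≠ (𝒜.component (𝟙 e) : Set R) ∧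
  ∀ L : Set R, 𝒜.IsLeftIdealIn e L → N ⊆ L →
    L = N ∨ L = (𝒜.component (𝟙 e) : Set R)

/-- The Jacobson radical `rad(R_e)` of the unital ring `R_e`, as a subset of `R`:
the intersection of all maximal left ideals of `R_e`. -/
def radIn (𝒜 : GRingData Γ R) (e : Γ) : Set R :=
  (𝒜.component (𝟙 e) : Set R) ∩ ⋂₀ {N : Set R | 𝒜.IsMaxLeftIdealIn e N}

/-- The quotient graded ring `R/I` of `R` by a graded ideal `I`. -/
noncomputable def quotRing (𝒜 : GRingData Γ R) (I : AddSubgroup R) :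
    GRingData Γ (R ⧸ I) where
  mul x y := QuotientAddGroup.mk (𝒜.mul (Quotient.out x) (Quotient.out y))
  component := fun γ => (𝒜.component γ).map (QuotientAddGroup.mk' I)
  one e := QuotientAddGroup.mk (𝒜.one e)

/-- `R` is a gr-semisimple ring. -/
def GrSemisimpleRing (𝒜 : GRingData Γ R) : Prop := 𝒜.toMod.GrSemisimple

/-- `R` is gr-semilocal: the `Γ`-graded ring `R/rad^gr(R)` is gr-semisimple. -/
noncomputable def GrSemilocal (𝒜 : GRingData Γ R) : Prop :=
  ((𝒜.quotRing 𝒜.toMod.grRad).GrSemisimpleRing)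

end GRingData

namespace GrProofAux

open CategoryTheory

variable {Γ : Type u} [Groupoid.{u} Γ] {R : Type u} [AddCommGroup R]

/-- The graded-generation property (second half of `IsGrSub`). -/
def Gr {X : Type u} [AddCommGroup X] (𝒩 : GModData Γ R X) (N : AddSubgroup X) : Prop :=
  ∀ n ∈ N, n ∈ AddSubgroup.closure {x : X | x ∈ N ∧ 𝒩.IsHomogeneous x}

/-- Closure under the right `R`-action (first half of `IsGrSub`). -/
def RCl {X : Type u} [AddCommGroup X] (𝒩 : GModData Γ R X) (N : AddSubgroup X) : Prop :=
  ∀ m ∈ N, ∀ a : R, 𝒩.smul m a ∈ N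

theorem comps_mem {X : Type u} [AddCommGroup X] (𝒩 : GModData Γ R X)
    (hind : ∀ (s : Finset (GrIdx Γ)) (cf : GrIdx Γ → X),
      (∀ γ ∈ s, cf γ ∈ 𝒩.component γ.2.2) → ∑ γ ∈ s, cf γ = 0 → ∀ γ ∈ s, cf γ = 0)
    {N : AddSubgroup X} (hN : Gr 𝒩 N) {x : X} (hx : x ∈ N)
    {s : Finset (GrIdx Γ)} {cf : GrIdx Γ → X}
    (hcf : ∀ γ ∈ s, cf γ ∈ 𝒩.component γ.2.2) (hsum : x = ∑ γ ∈ s, cf γ) :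
    ∀ γ ∈ s, cf γ ∈ N := by
  classical
  have hA : ∃ (t : Finset (GrIdx Γ)) (cg : GrIdx Γ → X),
      (∀ γ ∈ t, cg γ ∈ 𝒩.component γ.2.2 ∧ cg γ ∈ N) ∧ x = ∑ γ ∈ t, cg γ := by
    refine AddSubgroup.closure_induction (p := fun y _ => ∃ (t : Finset (GrIdx Γ)) (cg : GrIdx Γ → X),
      (∀ γ ∈ t, cg γ ∈ 𝒩.component γ.2.2 ∧ cg γ ∈ N) ∧ y = ∑ γ ∈ t, cg γ)
      ?_ ?_ ?_ ?_ (hN x hx)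
    · rintro y ⟨hyN, e, f, γ, hyγ⟩
      refine ⟨{⟨e, f, γ⟩}, fun δ => if δ = ⟨e, f, γ⟩ then y else 0, ?_, by simp⟩
      intro δ hδ
      simp only [Finset.mem_singleton] at hδ
      subst hδ
      simp only [if_pos rfl]
      exact ⟨hyγ, hyN⟩
    · exact ⟨∅, fun _ => 0, by simp, by simp⟩
    · rintro y z _ _ ⟨t₁, cg₁, h₁, hy⟩ ⟨t₂, cg₂, h₂, hz⟩
      refine ⟨t₁ ∪ t₂,
        fun γ => (if γ ∈ t₁ then cg₁ γ else 0) + (if γ ∈ t₂ then cg₂ γ else 0), ?_, ?_⟩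
      · intro γ _
        constructor
        · refine add_mem ?_ ?_ <;> (split_ifs with h)
          · exact (h₁ γ h).1
          · exact zero_mem _
          · exact (h₂ γ h).1
          · exact zero_mem _
        · refine add_mem ?_ ?_ <;> (split_ifs with h)
          · exact (h₁ γ h).2
          · exact zero_mem _
          · exact (h₂ γ h).2
          · exact zero_mem _
      · rw [Finset.sum_add_distrib, Finset.sum_ite_mem, Finset.sum_ite_mem,
          Finset.inter_eq_right.mpr Finset.subset_union_left,
          Finset.inter_eq_right.mpr Finset.subset_union_right, hy, hz]
    · rintro y _ ⟨t, cg, h, hy⟩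
      refine ⟨t, fun γ => -(cg γ), ?_, ?_⟩
      · exact fun γ hγ => ⟨neg_mem (h γ hγ).1, neg_mem (h γ hγ).2⟩
      · rw [hy, ← Finset.sum_neg_distrib]
  obtain ⟨t, cg, hgood, hx2⟩ := hA
  have key : ∀ δ ∈ s ∪ t,
      (if δ ∈ s then cf δ else 0) - (if δ ∈ t then cg δ else 0) = 0 := by
    apply hind (s ∪ t)
    · intro δ _
      refine sub_mem ?_ ?_ <;> (split_ifs with h)
      · exact hcf δ h
      · exact zero_mem _
      · exact (hgood δ h).1
      · exact zero_mem _
    · rw [Finset.sum_sub_distrib, Finset.sum_ite_mem, Finset.sum_ite_mem,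
        Finset.inter_eq_right.mpr Finset.subset_union_left,
        Finset.inter_eq_right.mpr Finset.subset_union_right, ← hsum, ← hx2, sub_self]
  intro γ hγ
  have h1 := key γ (Finset.mem_union_left _ hγ)
  rw [if_pos hγ, sub_eq_zero] at h1
  rw [h1]
  split_ifs with h
  · exact (hgood γ h).2
  · exact zero_mem _

end GrProofAux
namespace GrProofAux

set_option linter.unusedSectionVars false

open CategoryTheory

variable {Γ : Type u} [Groupoid.{u} Γ] {R : Type u} [AddCommGroup R]
  {M : Type u} [AddCommGroup M]
variable (𝒜 : GRingData Γ R) (ℳ : GModData Γ R M)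

/-- Right multiplication map `a ↦ m·a` as an additive hom. -/
def phi (hℳ : ℳ.IsGraded 𝒜) (m : M) : R →+ M :=
  AddMonoidHom.mk' (fun a => ℳ.smul m a) (hℳ.smul_add m)

/-- The cyclic submodule `mR`. -/
def orb (hℳ : ℳ.IsGraded 𝒜) (m : M) : AddSubgroup M := (phi 𝒜 ℳ hℳ m).range

/-- Partial sums `S i = v₀R + ⋯ + v_{i-1}R`. -/
def Sch (hℳ : ℳ.IsGraded 𝒜) (v : ℕ → M) : ℕ → AddSubgroup M
  | 0 => ⊥
  | (i+1) => Sch hℳ v i ⊔ orb 𝒜 ℳ hℳ (v i)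

variable (hℳ : ℳ.IsGraded 𝒜)
include hℳ

theorem zero_smul' (a : R) : ℳ.smul 0 a = 0 := by
  have h := hℳ.add_smul 0 0 a
  rw [add_zero] at h
  exact (left_eq_add.mp h)

theorem rcl_bot : RCl ℳ (⊥ : AddSubgroup M) := by
  intro m hm a
  rw [AddSubgroup.mem_bot] at hm
  subst hm
  rw [zero_smul' 𝒜 ℳ hℳ]
  exact zero_mem _

theorem rcl_sup {A B : AddSubgroup M} (hA : RCl ℳ A) (hB : RCl ℳ B) :
    RCl ℳ (A ⊔ B) := by
  intro x hx a
  rcases AddSubgroup.mem_sup.mp hx with ⟨y, hy, z, hz, hyz⟩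
  rw [← hyz, hℳ.add_smul]
  exact AddSubgroup.mem_sup.mpr ⟨_, hA y hy a, _, hB z hz a, rfl⟩

theorem rcl_inf {A B : AddSubgroup M} (hA : RCl ℳ A) (hB : RCl ℳ B) :
    RCl ℳ (A ⊓ B) := fun x hx a => ⟨hA x hx.1 a, hB x hx.2 a⟩

theorem rcl_orb (m : M) : RCl ℳ (orb 𝒜 ℳ hℳ m) := by
  rintro x hx r
  obtain ⟨a, ha⟩ := AddMonoidHom.mem_range.mp hx
  refine AddMonoidHom.mem_range.mpr ⟨𝒜.mul a r, ?_⟩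
  show ℳ.smul m (𝒜.mul a r) = _
  rw [hℳ.smul_mul]
  show ℳ.smul (phi 𝒜 ℳ hℳ m a) r = _
  rw [ha]

theorem rcl_Sch (v : ℕ → M) : ∀ i, RCl ℳ (Sch 𝒜 ℳ hℳ v i)
  | 0 => rcl_bot 𝒜 ℳ hℳ
  | (i+1) => rcl_sup 𝒜 ℳ hℳ (rcl_Sch v i) (rcl_orb 𝒜 ℳ hℳ (v i))

theorem gr_bot : Gr ℳ (⊥ : AddSubgroup M) := by
  intro n hn
  rw [AddSubgroup.mem_bot] at hn
  subst hn
  exact zero_mem _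

theorem gr_sup {A B : AddSubgroup M} (hA : Gr ℳ A) (hB : Gr ℳ B) :
    Gr ℳ (A ⊔ B) := by
  intro x hx
  rcases AddSubgroup.mem_sup.mp hx with ⟨y, hy, z, hz, hyz⟩
  rw [← hyz]
  refine add_mem ?_ ?_
  · refine AddSubgroup.closure_mono ?_ (hA y hy)
    intro w hw
    simp only [Set.mem_setOf_eq] at hw ⊢
    exact ⟨(le_sup_left : A ≤ A ⊔ B) hw.1, hw.2⟩
  · refine AddSubgroup.closure_mono ?_ (hB z hz)
    intro w hw
    simp only [Set.mem_setOf_eq] at hw ⊢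
    exact ⟨(le_sup_right : B ≤ A ⊔ B) hw.1, hw.2⟩

theorem gr_inf {A B : AddSubgroup M} (hA : Gr ℳ A) (hB : Gr ℳ B) :
    Gr ℳ (A ⊓ B) := by
  intro x hx
  obtain ⟨s, cf, hcf, hsum⟩ := hℳ.decompose x
  have hxA := comps_mem ℳ hℳ.independent hA hx.1 hcf hsum
  have hxB := comps_mem ℳ hℳ.independent hB hx.2 hcf hsum
  rw [hsum]
  refine AddSubgroup.sum_mem _ (fun γ hγ => AddSubgroup.subset_closure ?_)
  exact ⟨⟨hxA γ hγ, hxB γ hγ⟩, ⟨γ.1, γ.2.1, γ.2.2, hcf γ hγ⟩⟩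

theorem gr_orb (h𝒜 : 𝒜.IsObjectUnital) {m : M} (hm : ℳ.IsHomogeneous m ∨ m = 0) :
    Gr ℳ (orb 𝒜 ℳ hℳ m) := by
  rcases hm with ⟨e, f, σ, hm⟩ | rfl
  · intro x hx
    obtain ⟨a, ha⟩ := AddMonoidHom.mem_range.mp hx
    obtain ⟨s, cf, hcf, hsum⟩ := h𝒜.decompose a
    have hxs : x = ∑ γ ∈ s, ℳ.smul m (cf γ) := by
      rw [← ha, hsum]
      exact map_sum (phi 𝒜 ℳ hℳ m) cf s
    rw [hxs]
    refine AddSubgroup.sum_mem _ (fun γ hγ => AddSubgroup.subset_closure ?_)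
    refine ⟨AddMonoidHom.mem_range.mpr ⟨cf γ, rfl⟩, ?_⟩
    obtain ⟨g, x1, τ⟩ := γ
    by_cases h : x1 = e
    · subst h
      exact ⟨g, f, τ ≫ σ, hℳ.smul_mem σ τ hm (hcf _ hγ)⟩
    · rw [hℳ.smul_eq_zero σ τ h hm (hcf _ hγ)]
      exact ⟨e, f, σ, zero_mem _⟩
  · intro x hx
    obtain ⟨a, ha⟩ := AddMonoidHom.mem_range.mp hx
    have hx0 : x = 0 := by rw [← ha]; exact zero_smul' 𝒜 ℳ hℳ a
    rw [hx0]
    exact zero_mem _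

theorem gr_Sch (h𝒜 : 𝒜.IsObjectUnital) (v : ℕ → M)
    (hv : ∀ i, ℳ.IsHomogeneous (v i) ∨ v i = 0) :
    ∀ i, Gr ℳ (Sch 𝒜 ℳ hℳ v i)
  | 0 => gr_bot 𝒜 ℳ hℳ
  | (i+1) => gr_sup 𝒜 ℳ hℳ (gr_Sch h𝒜 v hv i) (gr_orb 𝒜 ℳ hℳ h𝒜 (hv i))

theorem Sch_mono (v : ℕ → M) {i j : ℕ} (hij : i ≤ j) :
    Sch 𝒜 ℳ hℳ v i ≤ Sch 𝒜 ℳ hℳ v j := by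
  induction j with
  | zero => rw [Nat.le_zero.mp hij]
  | succ j ih =>
    rcases Nat.lt_or_ge i (j+1) with h | h
    · exact le_trans (ih (Nat.lt_succ_iff.mp h)) le_sup_left
    · rw [Nat.le_antisymm hij h]

end GrProofAux
namespace GrProofAux

set_option linter.unusedSectionVars false
set_option maxHeartbeats 1000000

open CategoryTheory

variable {Γ : Type u} [Groupoid.{u} Γ] {R : Type u} [AddCommGroup R]
  {M : Type u} [AddCommGroup M]
variable (𝒜 : GRingData Γ R) (ℳ : GModData Γ R M) (hℳ : ℳ.IsGraded 𝒜)
include hℳ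

theorem Sch_succ (v : ℕ → M) (i : ℕ) :
    Sch 𝒜 ℳ hℳ v (i+1) = Sch 𝒜 ℳ hℳ v i ⊔ orb 𝒜 ℳ hℳ (v i) := rfl

theorem J_grsub (h𝒜 : 𝒜.IsObjectUnital) {m : M} {e f : Γ} {σ : e ⟶ f}
    (hm : m ∈ ℳ.component σ) {K : AddSubgroup M} (hK1 : RCl ℳ K) (hK2 : Gr ℳ K) :
    𝒜.toMod.IsGrSub (K.comap (phi 𝒜 ℳ hℳ m)) := by
  classical
  constructor
  · intro b hb r
    show phi 𝒜 ℳ hℳ m (𝒜.mul b r) ∈ K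
    show ℳ.smul m (𝒜.mul b r) ∈ K
    rw [hℳ.smul_mul]
    exact hK1 _ (AddSubgroup.mem_comap.mp hb) r
  · intro a ha
    obtain ⟨s, cf, hcf, hsum⟩ := h𝒜.decompose a
    set push : GrIdx Γ → GrIdx Γ := fun γ =>
      if h : γ.2.1 = e then ⟨γ.1, f, γ.2.2 ≫ eqToHom h ≫ σ⟩ else γ with hpushd
    set pull : GrIdx Γ → GrIdx Γ := fun δ =>
      if h : δ.2.1 = f then ⟨δ.1, e, δ.2.2 ≫ eqToHom h ≫ Groupoid.inv σ⟩ else δ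
      with hpulld
    set cf' : GrIdx Γ → M := fun δ =>
      if h : δ.2.1 = f then
        ℳ.smul m (cf ⟨δ.1, e, δ.2.2 ≫ eqToHom h ≫ Groupoid.inv σ⟩) else 0 with hcf'd
    set s₁ : Finset (GrIdx Γ) := s.filter (fun γ => γ.2.1 = e) with hs₁d
    have keyv : ∀ γ, γ.2.1 = e → cf' (push γ) = ℳ.smul m (cf γ) := by
      rintro ⟨g, x1, τ⟩ hx1
      dsimp at hx1
      subst hx1
      simp [hpushd, hcf'd, eqToHom_refl, Category.assoc, Groupoid.comp_inv]
    have keypp : ∀ γ, γ.2.1 = e → pull (push γ) = γ := by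
      rintro ⟨g, x1, τ⟩ hx1
      dsimp at hx1
      subst hx1
      simp [hpushd, hpulld, eqToHom_refl, Category.assoc, Groupoid.comp_inv]
    have keyinj : ∀ γ ∈ s₁, ∀ γ' ∈ s₁, push γ = push γ' → γ = γ' := by
      intro γ hγ γ' hγ' hpq
      have h1 := (Finset.mem_filter.mp hγ).2
      have h2 := (Finset.mem_filter.mp hγ').2
      rw [← keypp γ h1, ← keypp γ' h2, hpq]
    have hsum2 : ℳ.smul m a = ∑ δ ∈ s₁.image push, cf' δ := by
      rw [Finset.sum_image keyinj]
      have h1 : ∀ γ ∈ s₁, cf' (push γ) = ℳ.smul m (cf γ) :=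
        fun γ hγ => keyv γ (Finset.mem_filter.mp hγ).2
      rw [Finset.sum_congr rfl h1]
      have h2 : ∑ γ ∈ s₁, ℳ.smul m (cf γ) = ∑ γ ∈ s, ℳ.smul m (cf γ) := by
        refine Finset.sum_subset (Finset.filter_subset _ _) ?_
        intro γ hγ hγ'
        have hne : γ.2.1 ≠ e := fun h => hγ' (Finset.mem_filter.mpr ⟨hγ, h⟩)
        obtain ⟨g, x1, τ⟩ := γ
        exact hℳ.smul_eq_zero σ τ hne hm (hcf _ hγ)
      rw [h2, hsum]
      exact map_sum (phi 𝒜 ℳ hℳ m) cf s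
    have hcomp : ∀ δ ∈ s₁.image push, cf' δ ∈ ℳ.component δ.2.2 := by
      intro δ hδ
      obtain ⟨γ, hγ, rfl⟩ := Finset.mem_image.mp hδ
      have h1 := (Finset.mem_filter.mp hγ).2
      have h2 := (Finset.mem_filter.mp hγ).1
      obtain ⟨g, x1, τ⟩ := γ
      dsimp at h1
      subst h1
      rw [keyv ⟨g, x1, τ⟩ rfl]
      have : push ⟨g, x1, τ⟩ = ⟨g, f, τ ≫ σ⟩ := by
        simp [hpushd, eqToHom_refl]
      rw [this]
      exact hℳ.smul_mem σ τ hm (hcf _ h2)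
    have hmemK : ∀ δ ∈ s₁.image push, cf' δ ∈ K :=
      comps_mem ℳ hℳ.independent hK2 (AddSubgroup.mem_comap.mp ha) hcomp hsum2
    rw [hsum]
    refine AddSubgroup.sum_mem _ (fun γ hγ => AddSubgroup.subset_closure ?_)
    refine ⟨?_, ⟨γ.1, γ.2.1, γ.2.2, hcf γ hγ⟩⟩
    rw [AddSubgroup.mem_comap]
    by_cases h : γ.2.1 = e
    · have hmem : γ ∈ s₁ := Finset.mem_filter.mpr ⟨hγ, h⟩
      have hK := hmemK (push γ) (Finset.mem_image_of_mem push hmem)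
      rw [keyv γ h] at hK
      exact hK
    · show ℳ.smul m (cf γ) ∈ K
      have hcfγ := hcf γ hγ
      obtain ⟨g, x1, τ⟩ := γ
      rw [hℳ.smul_eq_zero σ τ h hm hcfγ]
      exact zero_mem _

theorem step (v : ℕ → M) (k : ℕ) {N N' : AddSubgroup M} (hle : N ≤ N')
    (hJ : ∀ i < k,
      ((N' ⊓ Sch 𝒜 ℳ hℳ v (i+1)) ⊔ Sch 𝒜 ℳ hℳ v i).comap (phi 𝒜 ℳ hℳ (v i))
      ≤ ((N ⊓ Sch 𝒜 ℳ hℳ v (i+1)) ⊔ Sch 𝒜 ℳ hℳ v i).comap (phi 𝒜 ℳ hℳ (v i))) :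
    N' ⊓ Sch 𝒜 ℳ hℳ v k ≤ N := by
  induction k with
  | zero =>
    intro x hx
    have : x = 0 := AddSubgroup.mem_bot.mp hx.2
    rw [this]; exact zero_mem _
  | succ k ih =>
    intro x hx
    have hx2 : x ∈ Sch 𝒜 ℳ hℳ v k ⊔ orb 𝒜 ℳ hℳ (v k) := hx.2
    rcases AddSubgroup.mem_sup.mp hx2 with ⟨w', hw', z, hz, hwz⟩
    obtain ⟨a, ha⟩ := AddMonoidHom.mem_range.mp hz
    have hxK' : x ∈ (N' ⊓ Sch 𝒜 ℳ hℳ v (k+1)) ⊔ Sch 𝒜 ℳ hℳ v k :=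
      (le_sup_left : N' ⊓ Sch 𝒜 ℳ hℳ v (k+1) ≤ _) ⟨hx.1, hx.2⟩
    have hzK' : z ∈ (N' ⊓ Sch 𝒜 ℳ hℳ v (k+1)) ⊔ Sch 𝒜 ℳ hℳ v k := by
      have : z = x - w' := by rw [← hwz]; abel
      rw [this]
      exact sub_mem hxK' ((le_sup_right : Sch 𝒜 ℳ hℳ v k ≤ _) hw')
    have haJ : a ∈ ((N' ⊓ Sch 𝒜 ℳ hℳ v (k+1)) ⊔ Sch 𝒜 ℳ hℳ v k).comap
        (phi 𝒜 ℳ hℳ (v k)) := by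
      rw [AddSubgroup.mem_comap, ha]
      exact hzK'
    have haJN := hJ k (Nat.lt_succ_self k) haJ
    rw [AddSubgroup.mem_comap, ha] at haJN
    have hxKN : x ∈ (N ⊓ Sch 𝒜 ℳ hℳ v (k+1)) ⊔ Sch 𝒜 ℳ hℳ v k := by
      rw [← hwz]
      exact add_mem ((le_sup_right : Sch 𝒜 ℳ hℳ v k ≤ _) hw') haJN
    rcases AddSubgroup.mem_sup.mp hxKN with ⟨u, hu, w, hw, huw⟩
    have hwN' : w ∈ N' := by
      have : w = x - u := by rw [← huw]; abel
      rw [this]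
      exact sub_mem hx.1 (hle hu.1)
    have hwN : w ∈ N := ih (fun i hi => hJ i (Nat.lt_succ_of_lt hi)) ⟨hwN', hw⟩
    rw [← huw]
    exact add_mem hu.1 hwN

end GrProofAux
namespace GrProofAux

set_option linter.unusedSectionVars false

open CategoryTheory

theorem stab {α : Type*} [PartialOrder α] (P : α → Prop)
    (hno : ¬ ∃ c : ℕ → α, (∀ n, P (c n)) ∧ ∀ n, c n < c (n+1))
    (c : ℕ → α) (hP : ∀ n, P (c n)) (hm : ∀ n, c n ≤ c (n+1)) :
    ∃ N, ∀ n, N ≤ n → c n = c N := by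
  by_contra h
  push_neg at h
  choose g hg1 hg2 using h
  have mono := monotone_nat_of_le_succ hm
  have hlt : ∀ N, c N < c (g N) :=
    fun N => lt_of_le_of_ne (mono (hg1 N)) (Ne.symm (hg2 N))
  exact hno ⟨fun t => c (g^[t] 0), fun t => hP _, fun t => by
    show c (g^[t] 0) < c (g^[t+1] 0)
    rw [Function.iterate_succ_apply']; exact hlt _⟩

theorem stabDesc {α : Type*} [PartialOrder α] (P : α → Prop)
    (hno : ¬ ∃ c : ℕ → α, (∀ n, P (c n)) ∧ ∀ n, c (n+1) < c n)
    (c : ℕ → α) (hP : ∀ n, P (c n)) (hm : ∀ n, c (n+1) ≤ c n) :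
    ∃ N, ∀ n, N ≤ n → c n = c N := by
  by_contra h
  push_neg at h
  choose g hg1 hg2 using h
  have anti := antitone_nat_of_succ_le hm
  have hlt : ∀ N, c (g N) < c N :=
    fun N => lt_of_le_of_ne (anti (hg1 N)) (hg2 N)
  exact hno ⟨fun t => c (g^[t] 0), fun t => hP _, fun t => by
    show c (g^[t+1] 0) < c (g^[t] 0)
    rw [Function.iterate_succ_apply']; exact hlt _⟩

variable {Γ : Type u} [Groupoid.{u} Γ] {R : Type u} [AddCommGroup R]
  {M : Type u} [AddCommGroup M]
variable (𝒜 : GRingData Γ R) (ℳ : GModData Γ R M) (hℳ : ℳ.IsGraded 𝒜)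
include hℳ

theorem gen_setup (hfg : ℳ.FG) : ∃ (k : ℕ) (v : ℕ → M),
    (∀ i, ℳ.IsHomogeneous (v i) ∨ v i = 0) ∧ (∀ i < k, ℳ.IsHomogeneous (v i)) ∧
    Sch 𝒜 ℳ hℳ v k = ⊤ := by
  classical
  obtain ⟨s, hs⟩ := hfg
  choose sx cfx hhom hsum using (fun x : M => hℳ.decompose x)
  set P : Finset M := s.biUnion (fun x => (sx x).image (cfx x)) with hPd
  have hPhom : ∀ p ∈ P, ℳ.IsHomogeneous p := by
    intro p hp
    obtain ⟨x, _, hpx⟩ := Finset.mem_biUnion.mp hp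
    obtain ⟨γ, hγ, rfl⟩ := Finset.mem_image.mp hpx
    exact ⟨γ.1, γ.2.1, γ.2.2, hhom x γ hγ⟩
  set k := P.card with hk
  set v : ℕ → M := fun i =>
    if h : i < k then ((P.equivFin.symm ⟨i, h⟩ : {x // x ∈ P}) : M) else 0 with hvd
  have hv1 : ∀ i < k, ℳ.IsHomogeneous (v i) := by
    intro i hi
    rw [hvd]
    simp only [dif_pos hi]
    exact hPhom _ (P.equivFin.symm ⟨i, hi⟩).2
  have hv2 : ∀ i, ℳ.IsHomogeneous (v i) ∨ v i = 0 := by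
    intro i
    by_cases h : i < k
    · exact Or.inl (hv1 i h)
    · right; rw [hvd]; simp only [dif_neg h]
  have hPin : ∀ p ∈ P, p ∈ Sch 𝒜 ℳ hℳ v k := by
    intro p hp
    obtain ⟨e, f, σ, hpσ⟩ := hPhom p hp
    set i := P.equivFin ⟨p, hp⟩ with hid
    have hvi : v i.1 = p := by
      rw [hvd]
      simp only [dif_pos i.isLt]
      have h1 : (⟨i.1, i.isLt⟩ : Fin k) = i := rfl
      rw [dif_pos (show (i : ℕ) < k from i.isLt)]
      exact congrArg Subtype.val (P.equivFin.symm_apply_apply ⟨p, hp⟩)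
    have hporb : p ∈ orb 𝒜 ℳ hℳ (v i.1) := by
      rw [hvi]
      exact AddMonoidHom.mem_range.mpr ⟨𝒜.one e, hℳ.smul_one σ hpσ⟩
    have h2 : orb 𝒜 ℳ hℳ (v i.1) ≤ Sch 𝒜 ℳ hℳ v (i.1+1) :=
      (le_sup_right : _ ≤ Sch 𝒜 ℳ hℳ v i.1 ⊔ orb 𝒜 ℳ hℳ (v i.1))
    exact Sch_mono 𝒜 ℳ hℳ v (Nat.succ_le_of_lt i.isLt) (h2 hporb)
  refine ⟨k, v, hv2, hv1, ?_⟩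
  refine le_antisymm le_top ?_
  rw [← hs]
  refine sInf_le ⟨?_, rcl_Sch 𝒜 ℳ hℳ v k⟩
  intro x hx
  rw [hsum x]
  refine AddSubgroup.sum_mem _ (fun γ hγ => hPin _ ?_)
  exact Finset.mem_biUnion.mpr ⟨x, Finset.mem_coe.mp hx, Finset.mem_image_of_mem _ hγ⟩

end GrProofAux
/-- Let `R` be a `Γ`-graded ring such that the right `R`-module
`R` is gr-noetherian (resp. gr-artinian), and let `M` be a `Γ`-graded right
`R`-module. If `M` is finitely generated, then `M` is gr-noetherian
(resp. gr-artinian). -/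
theorem grNoetherian_of_fg_and_grArtinian_of_fg
    {Γ : Type u} [Groupoid.{u} Γ] {R : Type u} [AddCommGroup R] {M : Type u}
    [AddCommGroup M] (𝒜 : GRingData Γ R) (h𝒜 : 𝒜.IsObjectUnital)
    (ℳ : GModData Γ R M) (hℳ : ℳ.IsGraded 𝒜) (hfg : ℳ.FG) :
    (𝒜.toMod.GrNoetherian → ℳ.GrNoetherian) ∧
    (𝒜.toMod.GrArtinian → ℳ.GrArtinian) := by
  classical
  obtain ⟨k, v, hv2, hv1, hSk⟩ := GrProofAux.gen_setup 𝒜 ℳ hℳ hfg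
  set S : ℕ → AddSubgroup M := GrProofAux.Sch 𝒜 ℳ hℳ v with hSd
  set J : ℕ → AddSubgroup M → AddSubgroup R := fun i N =>
    ((N ⊓ S (i+1)) ⊔ S i).comap (GrProofAux.phi 𝒜 ℳ hℳ (v i)) with hJd
  have hJgr : ∀ (N : AddSubgroup M), ℳ.IsGrSub N → ∀ i < k,
      𝒜.toMod.IsGrSub (J i N) := by
    intro N hN i hi
    obtain ⟨e, f, σ, hσ⟩ := hv1 i hi
    refine GrProofAux.J_grsub 𝒜 ℳ hℳ h𝒜 hσ ?_ ?_
    · exact GrProofAux.rcl_sup 𝒜 ℳ hℳ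
        (GrProofAux.rcl_inf 𝒜 ℳ hℳ hN.1 (GrProofAux.rcl_Sch 𝒜 ℳ hℳ v (i+1)))
        (GrProofAux.rcl_Sch 𝒜 ℳ hℳ v i)
    · exact GrProofAux.gr_sup 𝒜 ℳ hℳ
        (GrProofAux.gr_inf 𝒜 ℳ hℳ hN.2 (GrProofAux.gr_Sch 𝒜 ℳ hℳ h𝒜 v hv2 (i+1)))
        (GrProofAux.gr_Sch 𝒜 ℳ hℳ h𝒜 v hv2 i)
  have hJmono : ∀ i, ∀ {N N' : AddSubgroup M}, N ≤ N' → J i N ≤ J i N' := by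
    intro i N N' h
    exact AddSubgroup.comap_mono (sup_le_sup_right (inf_le_inf_right _ h) _)
  have key : ∀ (N N' : AddSubgroup M), N ≤ N' →
      (∀ i < k, J i N' ≤ J i N) → N' ≤ N := by
    intro N N' hle hJle
    have hstep := GrProofAux.step 𝒜 ℳ hℳ v k hle hJle
    intro x hx
    refine hstep ⟨hx, ?_⟩
    rw [show GrProofAux.Sch 𝒜 ℳ hℳ v k = ⊤ from hSk]
    exact AddSubgroup.mem_top x
  constructor
  · intro hR
    rintro ⟨c, hgr, hstrict⟩
    have hstab : ∀ i, ∃ Ni : ℕ, i < k → ∀ n, Ni ≤ n → J i (c n) = J i (c Ni) := by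
      intro i
      by_cases hi : i < k
      · obtain ⟨Ni, hNi⟩ := GrProofAux.stab 𝒜.toMod.IsGrSub hR
          (fun n => J i (c n)) (fun n => hJgr (c n) (hgr n) i hi)
          (fun n => hJmono i (le_of_lt (hstrict n)))
        exact ⟨Ni, fun _ => hNi⟩
      · exact ⟨0, fun h => absurd h hi⟩
    choose Nf hNf using hstab
    set n₀ := (Finset.range k).sup Nf with hn₀
    have hJeq : ∀ i < k, J i (c (n₀+1)) ≤ J i (c n₀) := by
      intro i hi
      have hle : Nf i ≤ n₀ := Finset.le_sup (Finset.mem_range.mpr hi)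
      rw [hNf i hi (n₀+1) (le_trans hle (Nat.le_succ _)), hNf i hi n₀ hle]
    have hfin := key (c n₀) (c (n₀+1)) (le_of_lt (hstrict n₀)) hJeq
    exact lt_irrefl _ (lt_of_lt_of_le (hstrict n₀) hfin)
  · intro hR
    rintro ⟨c, hgr, hstrict⟩
    have hstab : ∀ i, ∃ Ni : ℕ, i < k → ∀ n, Ni ≤ n → J i (c n) = J i (c Ni) := by
      intro i
      by_cases hi : i < k
      · obtain ⟨Ni, hNi⟩ := GrProofAux.stabDesc 𝒜.toMod.IsGrSub hR
          (fun n => J i (c n)) (fun n => hJgr (c n) (hgr n) i hi)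
          (fun n => hJmono i (le_of_lt (hstrict n)))
        exact ⟨Ni, fun _ => hNi⟩
      · exact ⟨0, fun h => absurd h hi⟩
    choose Nf hNf using hstab
    set n₀ := (Finset.range k).sup Nf with hn₀
    have hJeq : ∀ i < k, J i (c n₀) ≤ J i (c (n₀+1)) := by
      intro i hi
      have hle : Nf i ≤ n₀ := Finset.le_sup (Finset.mem_range.mpr hi)
      rw [hNf i hi (n₀+1) (le_trans hle (Nat.le_succ _)), hNf i hi n₀ hle]
    have hfin := key (c (n₀+1)) (c n₀) (le_of_lt (hstrict n₀)) hJeq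
    exact lt_irrefl _ (lt_of_lt_of_le (hstrict n₀) hfin)
end

section
/- Let R be a Γ-graded ring and M a Γ-graded right R-module. Then M is gr-noetherian (resp. gr-artinian) if and only if M is Γ0-noetherian (resp. Γ0-artinian) and the set Γ'₀(M) = {e ∈ Γ₀ : M(e) ≠ 0} is finite. -/
open CategoryTheory

universe u

variable {Γ : Type u} [Groupoid.{u} Γ]

section Aux

set_option linter.unusedSectionVars false

open AddSubgroup

variable {R : Type u} {M : Type u} [AddCommGroup R] [AddCommGroup M]
  {𝒜 : GRingData Γ R} {ℳ : GModData Γ R M}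

open scoped Classical

namespace GModData

theorem component_le_part (ℳ : GModData Γ R M) {a b : Γ} (γ : a ⟶ b) :
    ℳ.component γ ≤ ℳ.part b :=
  le_iSup₂ (f := fun (f : Γ) (δ : f ⟶ b) => ℳ.component δ) a γ

namespace IsGraded

/-- Right multiplication by `a`, as an additive homomorphism. -/
def smulHom (hℳ : ℳ.IsGraded 𝒜) (a : R) : M →+ M :=
  AddMonoidHom.mk' (fun m => ℳ.smul m a) (fun m n => hℳ.add_smul m n a)

theorem sum_filter_unique (hℳ : ℳ.IsGraded 𝒜) {s t : Finset (GrIdx Γ)}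
    {cf df : GrIdx Γ → M}
    (hcf : ∀ γ ∈ s, cf γ ∈ ℳ.component γ.2.2) (hdf : ∀ γ ∈ t, df γ ∈ ℳ.component γ.2.2)
    (h : ∑ γ ∈ s, cf γ = ∑ γ ∈ t, df γ) (e : Γ) :
    ∑ γ ∈ s.filter (fun γ => γ.2.1 = e), cf γ
      = ∑ γ ∈ t.filter (fun γ => γ.2.1 = e), df γ := by
  have key := hℳ.independent (s ∪ t)
      (fun γ => (if γ ∈ s then cf γ else 0) - (if γ ∈ t then df γ else 0)) ?_ ?_
  · have heq : ∀ γ ∈ s ∪ t,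
        (if γ ∈ s then cf γ else 0) = (if γ ∈ t then df γ else 0) := by
      intro γ hγ
      exact sub_eq_zero.mp (key γ hγ)
    have h1 : ((s ∪ t).filter (fun γ => γ.2.1 = e)) ∩ s
        = s.filter (fun γ => γ.2.1 = e) := by
      ext γ; simp only [Finset.mem_inter, Finset.mem_filter, Finset.mem_union]; tauto
    have h2 : ((s ∪ t).filter (fun γ => γ.2.1 = e)) ∩ t
        = t.filter (fun γ => γ.2.1 = e) := by
      ext γ; simp only [Finset.mem_inter, Finset.mem_filter, Finset.mem_union]; tauto
    rw [← h1, ← h2, ← Finset.sum_ite_mem, ← Finset.sum_ite_mem]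
    exact Finset.sum_congr rfl fun γ hγ => heq γ (Finset.mem_of_mem_filter γ hγ)
  · intro γ _
    refine sub_mem ?_ ?_
    · split
      · exact hcf _ ‹_›
      · exact zero_mem _
    · split
      · exact hdf _ ‹_›
      · exact zero_mem _
  · rw [Finset.sum_sub_distrib, Finset.sum_ite_mem, Finset.sum_ite_mem,
      Finset.union_inter_cancel_left, Finset.union_inter_cancel_right, h, sub_self]

/-- The projection of `M` onto `M(e)`, as a function. -/
noncomputable def proj (hℳ : ℳ.IsGraded 𝒜) (e : Γ) (x : M) : M :=
  ∑ γ ∈ (hℳ.decompose x).choose.filter (fun γ => γ.2.1 = e),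
    (hℳ.decompose x).choose_spec.choose γ

theorem proj_eq (hℳ : ℳ.IsGraded 𝒜) (e : Γ) {x : M} {s : Finset (GrIdx Γ)}
    {cf : GrIdx Γ → M} (hcf : ∀ γ ∈ s, cf γ ∈ ℳ.component γ.2.2)
    (hx : x = ∑ γ ∈ s, cf γ) :
    hℳ.proj e x = ∑ γ ∈ s.filter (fun γ => γ.2.1 = e), cf γ :=
  hℳ.sum_filter_unique (hℳ.decompose x).choose_spec.choose_spec.1 hcf
    ((hℳ.decompose x).choose_spec.choose_spec.2.symm.trans hx) e

theorem proj_add (hℳ : ℳ.IsGraded 𝒜) (e : Γ) (x y : M) :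
    hℳ.proj e (x + y) = hℳ.proj e x + hℳ.proj e y := by
  obtain ⟨s, cf, hcf, hx⟩ := hℳ.decompose x
  obtain ⟨t, df, hdf, hy⟩ := hℳ.decompose y
  have hmem : ∀ γ ∈ s ∪ t,
      (if γ ∈ s then cf γ else 0) + (if γ ∈ t then df γ else 0) ∈ ℳ.component γ.2.2 := by
    intro γ _
    refine add_mem ?_ ?_
    · split
      · exact hcf _ ‹_›
      · exact zero_mem _
    · split
      · exact hdf _ ‹_›
      · exact zero_mem _
  have hsum : x + y = ∑ γ ∈ s ∪ t,
      ((if γ ∈ s then cf γ else 0) + (if γ ∈ t then df γ else 0)) := by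
    rw [Finset.sum_add_distrib, Finset.sum_ite_mem, Finset.sum_ite_mem,
      Finset.union_inter_cancel_left, Finset.union_inter_cancel_right, hx, hy]
  have h1 : ((s ∪ t).filter (fun γ => γ.2.1 = e)) ∩ s
      = s.filter (fun γ => γ.2.1 = e) := by
    ext γ; simp only [Finset.mem_inter, Finset.mem_filter, Finset.mem_union]; tauto
  have h2 : ((s ∪ t).filter (fun γ => γ.2.1 = e)) ∩ t
      = t.filter (fun γ => γ.2.1 = e) := by
    ext γ; simp only [Finset.mem_inter, Finset.mem_filter, Finset.mem_union]; tauto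
  rw [hℳ.proj_eq e hmem hsum, hℳ.proj_eq e hcf hx, hℳ.proj_eq e hdf hy,
    Finset.sum_add_distrib, Finset.sum_ite_mem, Finset.sum_ite_mem, h1, h2]

/-- The projection of `M` onto `M(e)`, as an additive homomorphism. -/
noncomputable def projHom (hℳ : ℳ.IsGraded 𝒜) (e : Γ) : M →+ M :=
  AddMonoidHom.mk' (hℳ.proj e) (hℳ.proj_add e)

theorem proj_of_mem (hℳ : ℳ.IsGraded 𝒜) {a b : Γ} {γ : a ⟶ b} {x : M}
    (hx : x ∈ ℳ.component γ) : hℳ.proj b x = x := by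
  have hcf : ∀ δ ∈ ({⟨a, b, γ⟩} : Finset (GrIdx Γ)), (fun _ => x) δ ∈ ℳ.component δ.2.2 := by
    intro δ hδ
    rw [Finset.mem_singleton] at hδ
    subst hδ
    exact hx
  rw [hℳ.proj_eq b hcf (Finset.sum_singleton _ _).symm, Finset.filter_singleton,
    if_pos rfl, Finset.sum_singleton]

theorem proj_of_mem_ne (hℳ : ℳ.IsGraded 𝒜) {a b : Γ} {γ : a ⟶ b} {x : M}
    (hx : x ∈ ℳ.component γ) {e : Γ} (hne : b ≠ e) : hℳ.proj e x = 0 := by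
  have hcf : ∀ δ ∈ ({⟨a, b, γ⟩} : Finset (GrIdx Γ)), (fun _ => x) δ ∈ ℳ.component δ.2.2 := by
    intro δ hδ
    rw [Finset.mem_singleton] at hδ
    subst hδ
    exact hx
  rw [hℳ.proj_eq e hcf (Finset.sum_singleton _ _).symm, Finset.filter_singleton,
    if_neg hne, Finset.sum_empty]

theorem proj_mem_part (hℳ : ℳ.IsGraded 𝒜) (e : Γ) (x : M) :
    hℳ.proj e x ∈ ℳ.part e := by
  apply sum_mem
  intro γ hγ
  rw [Finset.mem_filter] at hγ
  have := (hℳ.decompose x).choose_spec.choose_spec.1 γ hγ.1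
  exact hγ.2 ▸ ℳ.component_le_part γ.2.2 this

theorem exists_sum_proj (hℳ : ℳ.IsGraded 𝒜) (x : M) :
    ∃ E : Finset Γ, x = ∑ e ∈ E, hℳ.proj e x := by
  obtain ⟨s, cf, hcf, hx⟩ := hℳ.decompose x
  refine ⟨s.image (fun γ => γ.2.1), ?_⟩
  calc x = ∑ γ ∈ s, cf γ := hx
    _ = ∑ e ∈ s.image (fun γ => γ.2.1), ∑ γ ∈ s.filter (fun γ => γ.2.1 = e), cf γ :=
        (Finset.sum_fiberwise_of_maps_to (fun γ hγ => Finset.mem_image_of_mem _ hγ) cf).symm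
    _ = ∑ e ∈ s.image (fun γ => γ.2.1), hℳ.proj e x :=
        Finset.sum_congr rfl fun e _ => (hℳ.proj_eq e hcf hx).symm

theorem proj_of_mem_part (hℳ : ℳ.IsGraded 𝒜) {e : Γ} {x : M}
    (hx : x ∈ ℳ.part e) : hℳ.proj e x = x := by
  have hle : ℳ.part e ≤ (hℳ.projHom e - AddMonoidHom.id M).ker := by
    apply iSup₂_le
    intro f γ m hm
    simp only [AddMonoidHom.mem_ker, AddMonoidHom.sub_apply, AddMonoidHom.id_apply,
      sub_eq_zero]
    exact hℳ.proj_of_mem hm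
  have := hle hx
  show hℳ.projHom e x = x
  simpa only [AddMonoidHom.mem_ker, AddMonoidHom.sub_apply, AddMonoidHom.id_apply,
    sub_eq_zero] using this

theorem part_le_ker (hℳ : ℳ.IsGraded 𝒜) {f e : Γ} (hne : f ≠ e) :
    ℳ.part f ≤ (hℳ.projHom e).ker := by
  apply iSup₂_le
  intro a γ m hm
  simp only [AddMonoidHom.mem_ker]
  exact hℳ.proj_of_mem_ne hm hne

theorem smul_mem_part (hℳ : ℳ.IsGraded 𝒜) (h𝒜 : 𝒜.IsObjectUnital) {e : Γ} {x : M}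
    (hx : x ∈ ℳ.part e) (a : R) : ℳ.smul x a ∈ ℳ.part e := by
  have hle : ℳ.part e ≤ (ℳ.part e).comap (hℳ.smulHom a) := by
    apply iSup₂_le
    intro f γ m hm
    show ℳ.smul m a ∈ ℳ.part e
    obtain ⟨t, cf, hcf, ha⟩ := h𝒜.decompose a
    have hsum : ℳ.smul m a = ∑ τ ∈ t, ℳ.smul m (cf τ) := by
      rw [ha]
      exact map_sum (AddMonoidHom.mk' (ℳ.smul m) (hℳ.smul_add m)) cf t
    rw [hsum]
    apply sum_mem
    rintro ⟨g, h', δ⟩ hτ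
    by_cases hh : h' = f
    · subst hh
      exact ℳ.component_le_part (δ ≫ γ) (hℳ.smul_mem γ δ hm (hcf _ hτ))
    · rw [hℳ.smul_eq_zero γ δ hh hm (hcf _ hτ)]
      exact zero_mem _
  exact hle hx

theorem isGrSub_part (hℳ : ℳ.IsGraded 𝒜) (h𝒜 : 𝒜.IsObjectUnital) (e : Γ) :
    ℳ.IsGrSub (ℳ.part e) := by
  constructor
  · intro m hm a
    exact hℳ.smul_mem_part h𝒜 hm a
  · intro n hn
    have hle : ℳ.part e ≤
        closure {x : M | x ∈ ℳ.part e ∧ ℳ.IsHomogeneous x} := by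
      apply iSup₂_le
      intro f γ y hy
      exact subset_closure ⟨ℳ.component_le_part γ hy, f, e, γ, hy⟩
    exact hle hn

theorem isGrSub_iSup (hℳ : ℳ.IsGraded 𝒜) {ι : Sort*} {N : ι → AddSubgroup M}
    (hN : ∀ i, ℳ.IsGrSub (N i)) : ℳ.IsGrSub (⨆ i, N i) := by
  constructor
  · intro m hm a
    have hsub : (⨆ i, N i) ≤ AddSubgroup.comap (hℳ.smulHom a) (⨆ i, N i) :=
      iSup_le fun i x hx => mem_comap.2 (le_iSup N i ((hN i).1 x hx a))
    exact hsub hm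
  · intro n hn
    have hle : (⨆ i, N i) ≤
        closure {x : M | x ∈ ⨆ i, N i ∧ ℳ.IsHomogeneous x} := by
      refine iSup_le fun i y hy => ?_
      refine closure_mono ?_ ((hN i).2 y hy)
      rintro z ⟨hz, hhom⟩
      exact ⟨le_iSup N i hz, hhom⟩
    exact hle hn

theorem proj_mem (hℳ : ℳ.IsGraded 𝒜) {N : AddSubgroup M} (hN : ℳ.IsGrSub N)
    {x : M} (hx : x ∈ N) (e : Γ) : hℳ.proj e x ∈ N := by
  have h1 : x ∈ closure {y : M | y ∈ N ∧ ℳ.IsHomogeneous y} := hN.2 x hx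
  have h2 : (hℳ.projHom e) x ∈
      (closure {y : M | y ∈ N ∧ ℳ.IsHomogeneous y}).map (hℳ.projHom e) :=
    mem_map_of_mem _ h1
  rw [AddMonoidHom.map_closure] at h2
  refine (closure_le N).2 ?_ h2
  rintro y ⟨z, ⟨hzN, a, b, γ, hz⟩, rfl⟩
  show hℳ.proj e z ∈ N
  by_cases hb : b = e
  · subst hb
    rw [hℳ.proj_of_mem hz]
    exact hzN
  · rw [hℳ.proj_of_mem_ne hz hb]
    exact zero_mem _

theorem le_of_inf_part_le (hℳ : ℳ.IsGraded 𝒜) {N K : AddSubgroup M}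
    (hN : ℳ.IsGrSub N) (h : ∀ e : Γ, ℳ.part e ≠ ⊥ → N ⊓ ℳ.part e ≤ K) : N ≤ K := by
  intro x hx
  obtain ⟨E, hE⟩ := hℳ.exists_sum_proj x
  rw [hE]
  apply sum_mem
  intro e _
  by_cases hbot : ℳ.part e = ⊥
  · have hm : hℳ.proj e x ∈ ℳ.part e := hℳ.proj_mem_part e x
    rw [hbot, mem_bot] at hm
    rw [hm]
    exact zero_mem _
  · exact h e hbot ⟨hℳ.proj_mem hN hx e, hℳ.proj_mem_part e x⟩

theorem restrict_smul_eq (hℳ : ℳ.IsGraded 𝒜) (h𝒜 : 𝒜.IsObjectUnital) {e : Γ}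
    (m : ↥(ℳ.part e)) (a : R) :
    (ℳ.restrict (ℳ.part e)).smul m a = ⟨ℳ.smul ↑m a, hℳ.smul_mem_part h𝒜 m.2 a⟩ :=
  dif_pos _

theorem isGrSub_map (hℳ : ℳ.IsGraded 𝒜) (h𝒜 : 𝒜.IsObjectUnital) {e : Γ}
    {N' : AddSubgroup ↥(ℳ.part e)} (h : (ℳ.restrict (ℳ.part e)).IsGrSub N') :
    ℳ.IsGrSub (N'.map (ℳ.part e).subtype) := by
  constructor
  · rintro m ⟨z, hz, rfl⟩ a
    refine ⟨(ℳ.restrict (ℳ.part e)).smul z a, h.1 z hz a, ?_⟩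
    rw [hℳ.restrict_smul_eq h𝒜]
    rfl
  · rintro n ⟨z, hz, rfl⟩
    have h2 := h.2 z hz
    have h3 : ((ℳ.part e).subtype) z ∈
        (closure {x : ↥(ℳ.part e) | x ∈ N' ∧ (ℳ.restrict (ℳ.part e)).IsHomogeneous x}).map
          (ℳ.part e).subtype := mem_map_of_mem _ h2
    rw [AddMonoidHom.map_closure] at h3
    refine (closure_le _).2 ?_ h3
    rintro y ⟨w, ⟨hwN, a, b, γ, hw⟩, rfl⟩
    exact subset_closure ⟨⟨w, hwN, rfl⟩, a, b, γ, hw⟩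

theorem mem_closure_inf (hℳ : ℳ.IsGraded 𝒜) {N : AddSubgroup M} (hN : ℳ.IsGrSub N)
    {e : Γ} {x : M} (hxN : x ∈ N) (hxe : x ∈ ℳ.part e) :
    x ∈ closure {y : M | (y ∈ N ∧ y ∈ ℳ.part e) ∧ ℳ.IsHomogeneous y} := by
  have h1 : x ∈ closure {y : M | y ∈ N ∧ ℳ.IsHomogeneous y} := hN.2 x hxN
  have h3 : (hℳ.projHom e) x ∈
      closure ((hℳ.projHom e) '' {y : M | y ∈ N ∧ ℳ.IsHomogeneous y}) := by
    rw [← AddMonoidHom.map_closure]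
    exact mem_map_of_mem _ h1
  rw [show (hℳ.projHom e) x = x from hℳ.proj_of_mem_part hxe] at h3
  refine (closure_le _).2 ?_ h3
  rintro y ⟨z, ⟨hzN, a, b, γ, hz⟩, rfl⟩
  show hℳ.proj e z ∈ _
  by_cases hb : b = e
  · subst hb
    rw [hℳ.proj_of_mem hz]
    exact subset_closure ⟨⟨hzN, ℳ.component_le_part γ hz⟩, a, b, γ, hz⟩
  · rw [hℳ.proj_of_mem_ne hz hb]
    exact zero_mem _

theorem isGrSub_addSubgroupOf (hℳ : ℳ.IsGraded 𝒜) (h𝒜 : 𝒜.IsObjectUnital)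
    {N : AddSubgroup M} (hN : ℳ.IsGrSub N) (e : Γ) :
    (ℳ.restrict (ℳ.part e)).IsGrSub (N.addSubgroupOf (ℳ.part e)) := by
  constructor
  · intro z hz a
    rw [hℳ.restrict_smul_eq h𝒜]
    exact hN.1 (↑z) hz a
  · intro z hz
    have hc := hℳ.mem_closure_inf hN (hz : (z : M) ∈ N) z.2
    have hsub : {y : M | (y ∈ N ∧ y ∈ ℳ.part e) ∧ ℳ.IsHomogeneous y} ⊆
        (ℳ.part e).subtype '' {w : ↥(ℳ.part e) | w ∈ N.addSubgroupOf (ℳ.part e) ∧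
          (ℳ.restrict (ℳ.part e)).IsHomogeneous w} := by
      rintro y ⟨⟨hyN, hye⟩, a, b, γ, hy⟩
      exact ⟨⟨y, hye⟩, ⟨hyN, a, b, γ, hy⟩, rfl⟩
    have hz2 : (z : M) ∈ (closure {w : ↥(ℳ.part e) | w ∈ N.addSubgroupOf (ℳ.part e) ∧
        (ℳ.restrict (ℳ.part e)).IsHomogeneous w}).map (ℳ.part e).subtype := by
      rw [AddMonoidHom.map_closure]
      exact (closure_le _).2 (fun y hy => subset_closure (hsub hy)) hc
    obtain ⟨w, hw, hwz⟩ := hz2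
    exact (show w = z from Subtype.ext hwz) ▸ hw

theorem eq_of_addSubgroupOf_eq (hℳ : ℳ.IsGraded 𝒜) {N K : AddSubgroup M}
    (hN : ℳ.IsGrSub N) (hK : ℳ.IsGrSub K)
    (h : ∀ e : Γ, ℳ.part e ≠ ⊥ →
      N.addSubgroupOf (ℳ.part e) = K.addSubgroupOf (ℳ.part e)) : N = K := by
  have hinf : ∀ e, ℳ.part e ≠ ⊥ → N ⊓ ℳ.part e = K ⊓ ℳ.part e := by
    intro e he
    rw [← addSubgroupOf_map_subtype, ← addSubgroupOf_map_subtype, h e he]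
  apply le_antisymm
  · exact hℳ.le_of_inf_part_le hN fun e he => (hinf e he) ▸ inf_le_left
  · exact hℳ.le_of_inf_part_le hK fun e he => (hinf e he).symm ▸ inf_le_left

theorem exists_infinite_bad (hℳ : ℳ.IsGraded 𝒜) (hfin : ℳ.partSupport.Finite)
    {c : ℕ → AddSubgroup M} (hgr : ∀ n, ℳ.IsGrSub (c n)) (hne : ∀ n, c n ≠ c (n + 1)) :
    ∃ e, ℳ.part e ≠ ⊥ ∧ {n : ℕ | (c n).addSubgroupOf (ℳ.part e) ≠
      (c (n + 1)).addSubgroupOf (ℳ.part e)}.Infinite := by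
  by_contra hcon
  push_neg at hcon
  have hfinU : (⋃ e ∈ ℳ.partSupport, {n : ℕ | (c n).addSubgroupOf (ℳ.part e) ≠
      (c (n + 1)).addSubgroupOf (ℳ.part e)}).Finite :=
    Set.Finite.biUnion hfin fun e he => hcon e he
  have hcover : (Set.univ : Set ℕ) ⊆ ⋃ e ∈ ℳ.partSupport,
      {n : ℕ | (c n).addSubgroupOf (ℳ.part e) ≠ (c (n + 1)).addSubgroupOf (ℳ.part e)} := by
    intro n _
    by_contra hn
    simp only [Set.mem_iUnion, Set.mem_setOf_eq, not_exists, not_not] at hn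
    exact hne n (hℳ.eq_of_addSubgroupOf_eq (hgr n) (hgr (n + 1)) hn)
  exact Set.infinite_univ (hfinU.subset hcover)

theorem grNoetherian_of (hℳ : ℳ.IsGraded 𝒜) (h𝒜 : 𝒜.IsObjectUnital)
    (hG0 : ℳ.G0Noetherian) (hfin : ℳ.partSupport.Finite) : ℳ.GrNoetherian := by
  rintro ⟨c, hgr, hlt⟩
  obtain ⟨e, he, hT⟩ := hℳ.exists_infinite_bad hfin hgr (fun n => (hlt n).ne)
  have hmono : Monotone c := monotone_nat_of_le_succ fun n => (hlt n).le
  set p : ℕ → Prop := fun n => (c n).addSubgroupOf (ℳ.part e) ≠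
    (c (n + 1)).addSubgroupOf (ℳ.part e) with hp
  refine hG0 e ⟨fun k => (c (Nat.nth p k)).addSubgroupOf (ℳ.part e),
    fun k => hℳ.isGrSub_addSubgroupOf h𝒜 (hgr _) e, fun k => ?_⟩
  have h1 : (c (Nat.nth p k)).addSubgroupOf (ℳ.part e) ≤
      (c (Nat.nth p k + 1)).addSubgroupOf (ℳ.part e) :=
    comap_mono (hmono (Nat.le_succ _))
  have h2 : (c (Nat.nth p k)).addSubgroupOf (ℳ.part e) ≠
      (c (Nat.nth p k + 1)).addSubgroupOf (ℳ.part e) := Nat.nth_mem_of_infinite hT k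
  have h3 : (c (Nat.nth p k + 1)).addSubgroupOf (ℳ.part e) ≤
      (c (Nat.nth p (k + 1))).addSubgroupOf (ℳ.part e) :=
    comap_mono (hmono (Nat.succ_le_of_lt (Nat.nth_strictMono hT (Nat.lt_succ_self k))))
  exact lt_of_lt_of_le (lt_of_le_of_ne h1 h2) h3

theorem grArtinian_of (hℳ : ℳ.IsGraded 𝒜) (h𝒜 : 𝒜.IsObjectUnital)
    (hG0 : ℳ.G0Artinian) (hfin : ℳ.partSupport.Finite) : ℳ.GrArtinian := by
  rintro ⟨c, hgr, hlt⟩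
  obtain ⟨e, he, hT⟩ := hℳ.exists_infinite_bad hfin hgr (fun n => (hlt n).ne')
  have hmono : Antitone c := antitone_nat_of_succ_le fun n => (hlt n).le
  set p : ℕ → Prop := fun n => (c n).addSubgroupOf (ℳ.part e) ≠
    (c (n + 1)).addSubgroupOf (ℳ.part e) with hp
  refine hG0 e ⟨fun k => (c (Nat.nth p k)).addSubgroupOf (ℳ.part e),
    fun k => hℳ.isGrSub_addSubgroupOf h𝒜 (hgr _) e, fun k => ?_⟩
  have h1 : (c (Nat.nth p k + 1)).addSubgroupOf (ℳ.part e) ≤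
      (c (Nat.nth p k)).addSubgroupOf (ℳ.part e) :=
    comap_mono (hmono (Nat.le_succ _))
  have h2 : (c (Nat.nth p k)).addSubgroupOf (ℳ.part e) ≠
      (c (Nat.nth p k + 1)).addSubgroupOf (ℳ.part e) := Nat.nth_mem_of_infinite hT k
  have h3 : (c (Nat.nth p (k + 1))).addSubgroupOf (ℳ.part e) ≤
      (c (Nat.nth p k + 1)).addSubgroupOf (ℳ.part e) :=
    comap_mono (hmono (Nat.succ_le_of_lt (Nat.nth_strictMono hT (Nat.lt_succ_self k))))
  exact lt_of_le_of_lt h3 (lt_of_le_of_ne h1 h2.symm)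

theorem g0Noetherian_of (hℳ : ℳ.IsGraded 𝒜) (h𝒜 : 𝒜.IsObjectUnital)
    (h : ℳ.GrNoetherian) : ℳ.G0Noetherian := by
  rintro e ⟨c, hgr, hlt⟩
  refine h ⟨fun n => (c n).map (ℳ.part e).subtype,
    fun n => hℳ.isGrSub_map h𝒜 (hgr n), fun n => ?_⟩
  exact lt_of_le_of_ne (map_mono (hlt n).le)
    fun hEq => (hlt n).ne (map_injective (subtype_injective _) hEq)

theorem g0Artinian_of (hℳ : ℳ.IsGraded 𝒜) (h𝒜 : 𝒜.IsObjectUnital)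
    (h : ℳ.GrArtinian) : ℳ.G0Artinian := by
  rintro e ⟨c, hgr, hlt⟩
  refine h ⟨fun n => (c n).map (ℳ.part e).subtype,
    fun n => hℳ.isGrSub_map h𝒜 (hgr n), fun n => ?_⟩
  exact lt_of_le_of_ne (map_mono (hlt n).le)
    fun hEq => (hlt n).ne (map_injective (subtype_injective _) hEq)

theorem support_finite_of_grNoetherian (hℳ : ℳ.IsGraded 𝒜) (h𝒜 : 𝒜.IsObjectUnital)
    (h : ℳ.GrNoetherian) : ℳ.partSupport.Finite := by
  by_contra hinf
  replace hinf : ℳ.partSupport.Infinite := hinf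
  set F : ℕ → Γ := fun n => ((Set.Infinite.natEmbedding _ hinf) n : Γ) with hF
  have hFmem : ∀ n, ℳ.part (F n) ≠ ⊥ := fun n => ((Set.Infinite.natEmbedding _ hinf) n).2
  have hFinj : Function.Injective F := fun a b hab =>
    (Set.Infinite.natEmbedding _ hinf).injective (Subtype.ext hab)
  refine h ⟨fun n => ⨆ i : Fin n, ℳ.part (F i),
    fun n => hℳ.isGrSub_iSup fun i => hℳ.isGrSub_part h𝒜 _, fun n => ?_⟩
  obtain ⟨⟨x, hx⟩, hx0⟩ := (AddSubgroup.ne_bot_iff_exists_ne_zero).mp (hFmem n)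
  have hxne : x ≠ 0 := fun hh => hx0 (Subtype.ext hh)
  rw [SetLike.lt_iff_le_and_exists]
  constructor
  · refine iSup_le fun i => ?_
    refine le_iSup_of_le (Fin.castSucc i) (le_of_eq ?_)
    rw [Fin.coe_castSucc]
  · refine ⟨x, ?_, ?_⟩
    · have := le_iSup (fun i : Fin (n + 1) => ℳ.part (F ↑i)) (Fin.last n)
      rw [Fin.val_last] at this
      exact this hx
    · intro hxc
      have hker : (⨆ i : Fin n, ℳ.part (F ↑i)) ≤ (hℳ.projHom (F n)).ker := by
        refine iSup_le fun i => hℳ.part_le_ker fun hh => ?_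
        exact Nat.ne_of_lt i.2 (hFinj hh)
      have h0 : hℳ.proj (F n) x = 0 := hker hxc
      rw [hℳ.proj_of_mem_part hx] at h0
      exact hxne h0

theorem support_finite_of_grArtinian (hℳ : ℳ.IsGraded 𝒜) (h𝒜 : 𝒜.IsObjectUnital)
    (h : ℳ.GrArtinian) : ℳ.partSupport.Finite := by
  by_contra hinf
  replace hinf : ℳ.partSupport.Infinite := hinf
  set F : ℕ → Γ := fun n => ((Set.Infinite.natEmbedding _ hinf) n : Γ) with hF
  have hFmem : ∀ n, ℳ.part (F n) ≠ ⊥ := fun n => ((Set.Infinite.natEmbedding _ hinf) n).2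
  have hFinj : Function.Injective F := fun a b hab =>
    (Set.Infinite.natEmbedding _ hinf).injective (Subtype.ext hab)
  refine h ⟨fun n => ⨆ i : {i : ℕ // n ≤ i}, ℳ.part (F i),
    fun n => hℳ.isGrSub_iSup fun i => hℳ.isGrSub_part h𝒜 _, fun n => ?_⟩
  obtain ⟨⟨x, hx⟩, hx0⟩ := (AddSubgroup.ne_bot_iff_exists_ne_zero).mp (hFmem n)
  have hxne : x ≠ 0 := fun hh => hx0 (Subtype.ext hh)
  rw [SetLike.lt_iff_le_and_exists]
  constructor
  · exact iSup_le fun i => le_iSup_of_le ⟨i.1, Nat.le_of_succ_le i.2⟩ le_rfl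
  · refine ⟨x, le_iSup (fun i : {i : ℕ // n ≤ i} => ℳ.part (F ↑i)) ⟨n, le_rfl⟩ hx, ?_⟩
    intro hxc
    have hker : (⨆ i : {i : ℕ // n + 1 ≤ i}, ℳ.part (F ↑i)) ≤ (hℳ.projHom (F n)).ker := by
      refine iSup_le fun i => hℳ.part_le_ker fun hh => ?_
      exact Nat.ne_of_gt i.2 (hFinj hh)
    have h0 : hℳ.proj (F n) x = 0 := hker hxc
    rw [hℳ.proj_of_mem_part hx] at h0
    exact hxne h0

end IsGraded

end GModData

end Aux

/-- Let `R` be a `Γ`-graded ring and `M` a `Γ`-graded right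
`R`-module. Then `M` is gr-noetherian (resp. gr-artinian) iff `M` is
`Γ₀`-noetherian (resp. `Γ₀`-artinian) and `Γ'₀(M) = {e ∈ Γ₀ : M(e) ≠ 0}` is
finite. -/
theorem grNoetherian_iff_g0Noetherian_and_finite_support
    {Γ : Type u} [Groupoid.{u} Γ] {R : Type u} [AddCommGroup R] {M : Type u}
    [AddCommGroup M] (𝒜 : GRingData Γ R) (h𝒜 : 𝒜.IsObjectUnital)
    (ℳ : GModData Γ R M) (hℳ : ℳ.IsGraded 𝒜) :
    (ℳ.GrNoetherian ↔ ℳ.G0Noetherian ∧ ℳ.partSupport.Finite) ∧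
    (ℳ.GrArtinian ↔ ℳ.G0Artinian ∧ ℳ.partSupport.Finite) := by
  constructor
  · constructor
    · intro h
      exact ⟨hℳ.g0Noetherian_of h𝒜 h, hℳ.support_finite_of_grNoetherian h𝒜 h⟩
    · rintro ⟨hG0, hfin⟩
      exact hℳ.grNoetherian_of h𝒜 hG0 hfin
  · constructor
    · intro h
      exact ⟨hℳ.g0Artinian_of h𝒜 h, hℳ.support_finite_of_grArtinian h𝒜 h⟩
    · rintro ⟨hG0, hfin⟩
      exact hℳ.grArtinian_of h𝒜 hG0 hfin
end
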